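/- For H ∈ (1/2,1), K ∈ (1,2) with HK ∈ (0,1), and all t ≥ s ≥ 0: (1/2^K)((2t^(2H))^K + (2s^(2H))^K - 2((t^(2H)+s^(2H))^K - (t-s)^(2HK))) ≤ 2^(2-K)·(t-s)^(2HK). -/

import Mathlib

open Real

/-- Chord bound from concavity: for `0 ≤ θ ≤ 1`, `0 < a`, `0 ≤ b ≤ a`,
`a^θ + (2^θ - 1) * b * a^(θ-1) ≤ (a+b)^θ`. -/
lemma aux_chord {θ : ℝ} (hθ0 : 0 ≤ θ) (hθ1 : θ ≤ 1) {a b : ℝ} (ha : 0 < a) (hb : 0 ≤ b)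
    (hba : b ≤ a) :
    a ^ θ + ((2:ℝ) ^ θ - 1) * b * a ^ (θ - 1) ≤ (a + b) ^ θ := by
  have hy0 : 0 ≤ b / a := div_nonneg hb ha.le
  have hy1 : b / a ≤ 1 := (div_le_one ha).2 hba
  have hch : 1 + ((2:ℝ) ^ θ - 1) * (b / a) ≤ (1 + b / a) ^ θ := by
    have h2 := (Real.concaveOn_rpow hθ0 hθ1).2 (Set.mem_Ici.2 zero_le_one)
      (Set.mem_Ici.2 (by norm_num : (0:ℝ) ≤ 2)) (by linarith : 0 ≤ 1 - b / a) hy0 (by ring)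
    simp only [smul_eq_mul] at h2
    rw [Real.one_rpow] at h2
    have he : (1 - b / a) * 1 + b / a * 2 = 1 + b / a := by ring
    rw [he] at h2
    linarith
  have hmul : (a + b) ^ θ = a ^ θ * (1 + b / a) ^ θ := by
    rw [← Real.mul_rpow ha.le (by linarith : (0:ℝ) ≤ 1 + b / a)]
    congr 1
    field_simp
  have haθ : 0 ≤ a ^ θ := Real.rpow_nonneg ha.le θ
  have h3 := mul_le_mul_of_nonneg_left hch haθ
  rw [← hmul] at h3
  have hid : a ^ θ * (1 + ((2:ℝ) ^ θ - 1) * (b / a)) =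
      a ^ θ + ((2:ℝ) ^ θ - 1) * b * a ^ (θ - 1) := by
    rw [Real.rpow_sub_one ha.ne' θ]
    field_simp
  linarith [hid ▸ h3]

/-- Bernoulli consequence: for `1 ≤ p`, `0 ≤ s ≤ u`, `0 < u`,
`u^p - p*u^(p-1)*(u-s) ≤ s^p`. -/
lemma aux_bern {p u s : ℝ} (hp : 1 ≤ p) (hs : 0 ≤ s) (hsu : s ≤ u) (hu : 0 < u) :
    u ^ p - p * u ^ (p - 1) * (u - s) ≤ s ^ p := by
  have h := one_add_mul_self_le_rpow_one_add (show -1 ≤ s / u - 1 by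
    have := div_nonneg hs hu.le; linarith) hp
  have he : 1 + (s / u - 1) = s / u := by ring
  rw [he, Real.div_rpow hs hu.le] at h
  have hup : 0 < u ^ p := Real.rpow_pos_of_pos hu p
  have h2 := mul_le_mul_of_nonneg_right h hup.le
  rw [div_mul_cancel₀ _ hup.ne'] at h2
  have hup1 : u ^ (p - 1) * u = u ^ p := by
    rw [Real.rpow_sub_one hu.ne']; field_simp
  have hid : (1 + p * (s / u - 1)) * u ^ p = u ^ p - p * u ^ (p - 1) * (u - s) := by
    rw [← hup1]
    field_simp
    ring
  linarith [hid ▸ h2]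

set_option maxHeartbeats 1000000 in
theorem stmt_4 (H K : ℝ) (hH : H ∈ Set.Ioo (1/2 : ℝ) 1) (hK : K ∈ Set.Ioo (1:ℝ) 2)
    (hHK : H * K ∈ Set.Ioo (0:ℝ) 1)
    (s t : ℝ) (hs : 0 ≤ s) (hst : s ≤ t) :
    (1 / (2:ℝ) ^ K) * ((2 * t ^ (2*H)) ^ K + (2 * s ^ (2*H)) ^ K
        - 2 * ((t ^ (2*H) + s ^ (2*H)) ^ K - (t - s) ^ (2*H*K)))
      ≤ (2:ℝ) ^ (2 - K) * (t - s) ^ (2*H*K) := by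
  obtain ⟨hH1, hH2⟩ := hH
  obtain ⟨hK1, hK2⟩ := hK
  obtain ⟨hHK0, hHK1⟩ := hHK
  have ht : 0 ≤ t := hs.trans hst
  set c : ℝ := 2*H*K with hc
  have hc1 : 1 < c := by nlinarith
  have hc2 : c < 2 := by nlinarith
  have hc0 : 0 < c := by linarith
  have h2H : (1:ℝ) ≤ 2*H := by linarith
  set f : ℝ → ℝ := fun u => (2:ℝ)^(1-K) * ((u^(2*H) + s^(2*H))^K + (u - s)^c)
      - u^c - s^c with hf_def
  have hder : ∀ u : ℝ, HasDerivAt f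
      ((2:ℝ)^(1-K) * ((2*H*u^(2*H-1)) * K * (u^(2*H)+s^(2*H))^(K-1)
        + 1 * c * (u-s)^(c-1)) - c * u^(c-1)) u := by
    intro u
    have h1 : HasDerivAt (fun x : ℝ => x^(2*H)) (2*H*u^(2*H-1)) u :=
      Real.hasDerivAt_rpow_const (Or.inr h2H)
    have h2 : HasDerivAt (fun x : ℝ => x^(2*H) + s^(2*H)) (2*H*u^(2*H-1)) u := h1.add_const _
    have h3 := h2.rpow_const (p := K) (Or.inr hK1.le)
    have h4 : HasDerivAt (fun x : ℝ => x - s) 1 u := (hasDerivAt_id u).sub_const s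
    have h5 := h4.rpow_const (p := c) (Or.inr hc1.le)
    have h6 : HasDerivAt (fun x : ℝ => x^c) (c*u^(c-1)) u :=
      Real.hasDerivAt_rpow_const (Or.inr hc1.le)
    have hcomb := (((h3.add h5).const_mul ((2:ℝ)^(1-K))).sub h6).sub_const (s^c)
    exact hcomb
  have hdiff : Differentiable ℝ f := fun u => (hder u).differentiableAt
  have hE : 0 < (2:ℝ)^(1-K) := Real.rpow_pos_of_pos two_pos _
  have hmono : MonotoneOn f (Set.Ici s) := by
    apply monotoneOn_of_deriv_nonneg (convex_Ici s) hdiff.continuous.continuousOn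
      (fun u _ => (hdiff u).differentiableWithinAt)
    intro u hu
    rw [interior_Ici] at hu
    rw [(hder u).deriv]
    have hu0 : 0 < u := lt_of_le_of_lt hs hu
    have hd0 : 0 < u - s := sub_pos.2 hu
    have hv : 0 ≤ u^(2*H-1) := Real.rpow_nonneg hu0.le _
    have hau : 0 < u^(2*H) := Real.rpow_pos_of_pos hu0 _
    have hb0 : 0 ≤ s^(2*H) := Real.rpow_nonneg hs _
    have hba : s^(2*H) ≤ u^(2*H) := Real.rpow_le_rpow hs hu.le (by linarith)
    -- chord inequality
    have F1 := aux_chord (θ := K-1) (by linarith) (by linarith) hau hb0 hba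
    -- Bernoulli inequality
    have F2 := aux_bern h2H hs hu.le hu0
    -- exponent identities
    have I1 : (u^(2*H))^(K-1) * u^(2*H-1) = u^(c-1) := by
      rw [← Real.rpow_mul hu0.le, ← Real.rpow_add hu0]
      congr 1; rw [hc]; ring
    have I2 : (u^(2*H))^(K-1-1) * u^(2*H-1) = u^(c-1-2*H) := by
      rw [← Real.rpow_mul hu0.le, ← Real.rpow_add hu0]
      congr 1; rw [hc]; ring
    have I3 : u^(2*H) * u^(c-1-2*H) = u^(c-1) := by
      rw [← Real.rpow_add hu0]; congr 1; ring
    have I4 : u^(2*H-1) * u^(c-1-2*H) = u^(c-2) := by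
      rw [← Real.rpow_add hu0]; congr 1; ring
    have hz2 : 0 ≤ u^(c-1-2*H) := Real.rpow_nonneg hu0.le _
    -- scaled chord bound
    have hA : u^(c-1) + ((2:ℝ)^(K-1)-1) * (s^(2*H) * u^(c-1-2*H))
        ≤ (u^(2*H)+s^(2*H))^(K-1) * u^(2*H-1) := by
      have h := mul_le_mul_of_nonneg_right F1 hv
      calc u^(c-1) + ((2:ℝ)^(K-1)-1) * (s^(2*H) * u^(c-1-2*H))
          = (u^(2*H))^(K-1) * u^(2*H-1)
            + ((2:ℝ)^(K-1)-1) * s^(2*H) * ((u^(2*H))^(K-1-1) * u^(2*H-1)) := by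
            rw [I1, I2]; ring
        _ = ((u^(2*H)) ^ (K-1) + ((2:ℝ)^(K-1) - 1) * s^(2*H) * (u^(2*H)) ^ (K-1-1)) * u^(2*H-1) := by
            ring
        _ ≤ (u^(2*H)+s^(2*H))^(K-1) * u^(2*H-1) := h
    -- scaled Bernoulli bound
    have hbz2 : u^(c-1) - 2*H*((u-s) * u^(c-2)) ≤ s^(2*H) * u^(c-1-2*H) := by
      have h := mul_le_mul_of_nonneg_right F2 hz2
      calc u^(c-1) - 2*H*((u-s) * u^(c-2))
          = u^(2*H) * u^(c-1-2*H) - 2*H*((u-s) * (u^(2*H-1) * u^(c-1-2*H))) := by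
            rw [I3, I4]
        _ = (u^(2*H) - 2*H*u^(2*H-1)*(u-s)) * u^(c-1-2*H) := by ring
        _ ≤ s^(2*H) * u^(c-1-2*H) := h
    -- the (u-s)^(c-1) bound
    have hY : u^(c-2) * (u-s) ≤ (u-s)^(c-1) := by
      have h1 : u^(c-2) ≤ (u-s)^(c-2) :=
        Real.rpow_le_rpow_of_nonpos hd0 (by linarith) (by linarith)
      have h2 : (u-s)^(c-1) = (u-s)^(c-2) * (u-s) := by
        rw [show c-1 = (c-2)+1 by ring, Real.rpow_add_one hd0.ne']
      rw [h2]
      exact mul_le_mul_of_nonneg_right h1 hd0.le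
    -- the constant bound
    have hP : (2:ℝ)^(K-1) ≤ K := by
      have h := rpow_one_add_le_one_add_mul_self (s := (1:ℝ)) (by norm_num)
        (p := K-1) (by linarith) (by linarith)
      norm_num at h
      linarith
    have hP1 : (1:ℝ) ≤ (2:ℝ)^(K-1) := by
      have h : (2:ℝ)^(0:ℝ) ≤ (2:ℝ)^(K-1) :=
        Real.rpow_le_rpow_of_exponent_le (by norm_num) (by linarith)
      simpa using h
    have hzd : 0 ≤ u^(c-2) * (u-s) :=
      mul_nonneg (Real.rpow_nonneg hu0.le _) hd0.le
    have hF4 : ((2:ℝ)^(K-1)-1)*(2*H) ≤ 1 := by nlinarith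
    -- key pointwise inequality
    have hkey : (2:ℝ)^(K-1) * u^(c-1)
        ≤ (u^(2*H)+s^(2*H))^(K-1) * u^(2*H-1) + (u-s)^(c-1) := by
      have hp1 := mul_le_mul_of_nonneg_left hbz2 (by linarith : (0:ℝ) ≤ (2:ℝ)^(K-1)-1)
      have hp2 := mul_le_mul_of_nonneg_right hF4 hzd
      linarith [hA, hY, hp1, hp2]
    -- conclude
    have hPinv : (2:ℝ)^(1-K) * (2:ℝ)^(K-1) = 1 := by
      rw [← Real.rpow_add two_pos, show (1:ℝ)-K+(K-1) = 0 by ring, Real.rpow_zero]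
    have hfin : c * u^(c-1)
        ≤ (2:ℝ)^(1-K) * ((2*H*u^(2*H-1)) * K * (u^(2*H)+s^(2*H))^(K-1)
          + 1 * c * (u-s)^(c-1)) := by
      calc c * u^(c-1) = ((2:ℝ)^(1-K) * (2:ℝ)^(K-1)) * (c * u^(c-1)) := by
            rw [hPinv, one_mul]
        _ = (2:ℝ)^(1-K) * (c * ((2:ℝ)^(K-1) * u^(c-1))) := by ring
        _ ≤ (2:ℝ)^(1-K) * (c * ((u^(2*H)+s^(2*H))^(K-1) * u^(2*H-1) + (u-s)^(c-1))) := by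
            apply mul_le_mul_of_nonneg_left _ hE.le
            exact mul_le_mul_of_nonneg_left hkey hc0.le
        _ = (2:ℝ)^(1-K) * ((2*H*u^(2*H-1)) * K * (u^(2*H)+s^(2*H))^(K-1)
              + 1 * c * (u-s)^(c-1)) := by rw [hc]; ring
    linarith
  -- value at s
  have hfs : f s = 0 := by
    have e0 : ((0:ℝ))^c = 0 := Real.zero_rpow (by linarith)
    have e1 : (s^(2*H))^K = s^c := by
      rw [← Real.rpow_mul hs, ← hc]
    have e2 : (2:ℝ)^(1-K) * (2:ℝ)^K = 2 := by
      rw [← Real.rpow_add two_pos, show (1:ℝ)-K+K = 1 by ring, Real.rpow_one]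
    have e3 : (2 * s^(2*H))^K = (2:ℝ)^K * s^c := by
      rw [Real.mul_rpow (by norm_num) (Real.rpow_nonneg hs _), e1]
    simp only [hf_def]
    rw [sub_self, e0]
    have e4 : s^(2*H) + s^(2*H) = 2 * s^(2*H) := by ring
    rw [e4, e3]
    linear_combination (s^c) * e2
  have hftnn : 0 ≤ f t := by
    have h := hmono Set.self_mem_Ici (Set.mem_Ici.2 hst) hst
    rw [hfs] at h
    exact h
  have hk3 : t^c + s^c ≤ (2:ℝ)^(1-K) * ((t^(2*H)+s^(2*H))^K + (t-s)^c) := by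
    have : f t = (2:ℝ)^(1-K) * ((t^(2*H) + s^(2*H))^K + (t - s)^c) - t^c - s^c := by
      rw [hf_def]
    rw [this] at hftnn
    linarith
  -- final algebra
  have hQ : (0:ℝ) < (2:ℝ)^K := Real.rpow_pos_of_pos two_pos K
  have eT : (2 * t^(2*H))^K = (2:ℝ)^K * t^c := by
    rw [Real.mul_rpow (by norm_num) (Real.rpow_nonneg ht _), ← Real.rpow_mul ht, ← hc]
  have eS : (2 * s^(2*H))^K = (2:ℝ)^K * s^c := by
    rw [Real.mul_rpow (by norm_num) (Real.rpow_nonneg hs _), ← Real.rpow_mul hs, ← hc]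
  have eE : (2:ℝ)^(1-K) * (2:ℝ)^K = 2 := by
    rw [← Real.rpow_add two_pos, show (1:ℝ)-K+K = 1 by ring, Real.rpow_one]
  have eR : (2:ℝ)^(2-K) * (2:ℝ)^K = 4 := by
    rw [← Real.rpow_add two_pos, show (2:ℝ)-K+K = 2 by ring,
      show (2:ℝ) = ((2:ℕ):ℝ) by norm_num, Real.rpow_natCast]
    norm_num
  rw [div_mul_eq_mul_div, one_mul, div_le_iff₀ hQ]
  have hm := mul_le_mul_of_nonneg_left hk3 hQ.le
  have h1 : (2:ℝ)^K * ((2:ℝ)^(1-K) * ((t^(2*H)+s^(2*H))^K + (t-s)^c))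
      = 2 * ((t^(2*H)+s^(2*H))^K + (t-s)^c) := by
    rw [← mul_assoc, mul_comm ((2:ℝ)^K), eE]
  have h2 : (2:ℝ)^(2-K) * (t-s)^c * (2:ℝ)^K = 4 * (t-s)^c := by
    rw [mul_right_comm, eR]
  rw [eT, eS, h2]
  linarith [hm, h1]
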